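/- Let λ, μ ∈ ℝ satisfy μ > 0 and 3λ + 2μ > 0, and let G be the Kelvin matrix of fundamental solutions of the Lamé operator. Set b₁ = μ/(2μ+λ) and b₂ = 3(μ+λ)/(2μ+λ). Then for all x, y ∈ ℝ³ with x ≠ y, every unit vector ν ∈ ℝ³, and every vector b ∈ ℝ³, the conormal derivative of the Kelvin matrix satisfies λ (∇_x · (G(x−y)b)) ν + μ (∇_x(G(x−y)b) + (∇_x(G(x−y)b))ᵗ) ν = (−b₁ K₁(x,y) + K₂(x,y)) b, where K₁(x,y) = (ν (x−y)ᵗ − (x−y) νᵗ) / (4π|x−y|³) and K₂(x,y) = b₁ ((x−y)·ν)/(4π|x−y|³) I₃ + b₂ ((x−y)·ν)/(4π|x−y|⁵) (x−y)(x−y)ᵗ. -/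

import Mathlib

open MeasureTheory Real Matrix
open scoped RealInnerProductSpace

noncomputable section

/-- Three-dimensional Euclidean space. -/
abbrev E3 : Type := EuclideanSpace ℝ (Fin 3)

/-- Build an element of `E3` from coordinates. -/
def toE3 (v : Fin 3 → ℝ) : E3 := (WithLp.equiv 2 (Fin 3 → ℝ)).symm v

/-- Partial derivative in the `i`-th coordinate direction. -/
def pd (f : E3 → ℝ) (i : Fin 3) (x : E3) : ℝ :=
  fderiv ℝ f x (EuclideanSpace.single i 1)

/-- The gradient, as the vector of partial derivatives. -/
def grad3 (f : E3 → ℝ) (x : E3) : E3 := toE3 fun i => pd f i x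

/-- The Laplacian: the sum of the second partial derivatives. -/
def lap3 (f : E3 → ℝ) (x : E3) : ℝ := ∑ i, pd (pd f i) i x

/-- Divergence of a vector field. -/
def div3 (u : E3 → E3) (x : E3) : ℝ := ∑ i, pd (fun y => u y i) i x

/-- Componentwise Laplacian of a vector field. -/
def vlap3 (u : E3 → E3) (x : E3) : E3 := toE3 fun i => lap3 (fun y => u y i) x

/-- Cross product in `ℝ³`. -/
def cross3 (u v : E3) : E3 :=
  toE3 ![u 1 * v 2 - u 2 * v 1, u 2 * v 0 - u 0 * v 2, u 0 * v 1 - u 1 * v 0]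

/-- The function `ℝ³ → ℝ` determined by a polynomial in three variables. -/
def polyFun (P : MvPolynomial (Fin 3) ℝ) : E3 → ℝ :=
  fun x => MvPolynomial.eval (fun i => x i) P

/-- The Kelvin matrix of fundamental solutions of the Lamé operator with parameters
`λ, μ`: `G_{jk}(x) = −(α₁/(4π)) δ_{jk}/|x| − (α₂/(4π)) x_j x_k/|x|³`, where
`α₁ = (1/μ + 1/(2μ+λ))/2` and `α₂ = (1/μ − 1/(2μ+λ))/2`. -/
def kelvin (lam mu : ℝ) (x : E3) : Matrix (Fin 3) (Fin 3) ℝ :=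
  Matrix.of fun j k =>
    -(((1 / mu + 1 / (2 * mu + lam)) / 2) / (4 * π)) * (if j = k then (1 : ℝ) else 0) / ‖x‖
      - (((1 / mu - 1 / (2 * mu + lam)) / 2) / (4 * π)) * (x j * x k) / ‖x‖ ^ 3

/-- The outer product `u vᵗ` of two vectors, as a `3 × 3` matrix. -/
def outer (u v : E3) : Matrix (Fin 3) (Fin 3) ℝ := Matrix.of fun i j => u i * v j

/-- The Jacobian matrix `(∇u)_{ij} = ∂u_i/∂x_j` of a vector field. -/
def jac3 (u : E3 → E3) (x : E3) : Matrix (Fin 3) (Fin 3) ℝ :=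
  Matrix.of fun i j => fderiv ℝ (fun y => u y i) x (EuclideanSpace.single j 1)


section Aux

lemma toE3_apply (v : Fin 3 → ℝ) (i : Fin 3) : toE3 v i = v i := rfl

lemma hasFDerivAt_norm_sub (y x : E3) (h : x - y ≠ 0) :
    HasFDerivAt (fun z : E3 => ‖z - y‖) (‖x - y‖⁻¹ • innerSL ℝ (x - y)) x := by
  have hr : (0:ℝ) < ‖x - y‖ := norm_pos_iff.mpr h
  have h2 : HasFDerivAt (fun z : E3 => ‖z - y‖ ^ 2)
      (2 • (innerSL ℝ (x - y)).comp (ContinuousLinearMap.id ℝ E3)) x :=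
    ((hasFDerivAt_id x).sub_const y).norm_sq
  have hs := (Real.hasDerivAt_sqrt (by positivity : ‖x - y‖ ^ 2 ≠ 0)).comp_hasFDerivAt x h2
  have hfun : (fun z : E3 => Real.sqrt (‖z - y‖ ^ 2)) = fun z : E3 => ‖z - y‖ := by
    funext z; exact Real.sqrt_sq (norm_nonneg _)
  rw [show (fun z : E3 => Real.sqrt (‖z - y‖ ^ 2)) =
      Real.sqrt ∘ (fun z : E3 => ‖z - y‖ ^ 2) from rfl] at hfun
  rw [← hfun]
  refine hs.congr_fderiv ?_
  ext v
  have : Real.sqrt (‖x - y‖ ^ 2) = ‖x - y‖ := Real.sqrt_sq (norm_nonneg _)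
  simp [this]
  field_simp

lemma hasFDerivAt_inv_norm (y x : E3) (h : x - y ≠ 0) :
    HasFDerivAt (fun z : E3 => ‖z - y‖⁻¹)
      ((-(‖x - y‖ ^ 3)⁻¹) • innerSL ℝ (x - y)) x := by
  have hr : (0:ℝ) < ‖x - y‖ := norm_pos_iff.mpr h
  have := (hasDerivAt_inv hr.ne').comp_hasFDerivAt x (hasFDerivAt_norm_sub y x h)
  refine this.congr_fderiv ?_
  rw [smul_smul]
  congr 1
  field_simp

lemma hasFDerivAt_inv_norm3 (y x : E3) (h : x - y ≠ 0) :
    HasFDerivAt (fun z : E3 => (‖z - y‖ ^ 3)⁻¹)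
      ((-3 * (‖x - y‖ ^ 5)⁻¹) • innerSL ℝ (x - y)) x := by
  have hr : (0:ℝ) < ‖x - y‖ := norm_pos_iff.mpr h
  have hpow : HasDerivAt (fun t : ℝ => (t ^ 3)⁻¹)
      (-(3 * ‖x - y‖ ^ 2) / (‖x - y‖ ^ 3) ^ 2) ‖x - y‖ := by
    have := (hasDerivAt_pow 3 ‖x - y‖).inv (pow_ne_zero 3 hr.ne')
    exact this.congr_deriv (by norm_num)
  have := hpow.comp_hasFDerivAt x (hasFDerivAt_norm_sub y x h)
  refine this.congr_fderiv ?_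
  rw [smul_smul]
  congr 1
  field_simp

lemma hasFDerivAt_coord (y x : E3) (j : Fin 3) :
    HasFDerivAt (fun z : E3 => (z - y) j)
      (EuclideanSpace.proj j : E3 →L[ℝ] ℝ) x := by
  have := ((EuclideanSpace.proj j (𝕜 := ℝ)).hasFDerivAt (x := x - y)).comp x
    ((hasFDerivAt_id x).sub_const y)
  simpa [Function.comp_def] using this

lemma hasFDerivAt_sumcoord (y x : E3) (b : E3) :
    HasFDerivAt (fun z : E3 => ∑ k, (z - y) k * b k)
      (∑ k, b k • (EuclideanSpace.proj k : E3 →L[ℝ] ℝ)) x :=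
  HasFDerivAt.fun_sum fun k _ => (hasFDerivAt_coord y x k).mul_const (b k)

lemma kelvin_comp_eq (lam mu : ℝ) (y b : E3) (i : Fin 3) :
    (fun z : E3 => toE3 ((kelvin lam mu (z - y)).mulVec fun j => b j) i) =
    (fun z : E3 =>
      (-(((1 / mu + 1 / (2 * mu + lam)) / 2) / (4 * π)) * b i) * ‖z - y‖⁻¹
        + (-((((1 / mu - 1 / (2 * mu + lam)) / 2) / (4 * π)))) *
            (((z - y) i * ∑ k, (z - y) k * b k) * (‖z - y‖ ^ 3)⁻¹)) := by
  funext z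
  show ((kelvin lam mu (z - y)).mulVec fun j => b j) i = _
  simp only [kelvin, Matrix.mulVec, dotProduct, Matrix.of_apply, sub_mul,
    Finset.sum_sub_distrib, mul_ite, mul_one, mul_zero, ite_div, zero_div, ite_mul, zero_mul,
    Finset.sum_ite_eq, Finset.mem_univ, if_true]
  simp only [Fin.sum_univ_three]
  ring

lemma hasFDerivAt_kelvin_comp (lam mu : ℝ) (y b x : E3) (h : x - y ≠ 0) (i : Fin 3) :
    HasFDerivAt (fun z : E3 => toE3 ((kelvin lam mu (z - y)).mulVec fun j => b j) i)
      ((-(((1 / mu + 1 / (2 * mu + lam)) / 2) / (4 * π)) * b i) •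
          ((-(‖x - y‖ ^ 3)⁻¹) • innerSL ℝ (x - y))
        + (-((((1 / mu - 1 / (2 * mu + lam)) / 2) / (4 * π)))) •
          (((x - y) i * ∑ k, (x - y) k * b k) • ((-3 * (‖x - y‖ ^ 5)⁻¹) • innerSL ℝ (x - y))
            + (‖x - y‖ ^ 3)⁻¹ •
              ((x - y) i • (∑ k, b k • (EuclideanSpace.proj k : E3 →L[ℝ] ℝ))
                + (∑ k, (x - y) k * b k) • (EuclideanSpace.proj i : E3 →L[ℝ] ℝ)))) x := by
  rw [kelvin_comp_eq lam mu y b i]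
  exact ((hasFDerivAt_inv_norm y x h).const_mul _).add
    ((((hasFDerivAt_coord y x i).mul (hasFDerivAt_sumcoord y x b)).mul
      (hasFDerivAt_inv_norm3 y x h)).const_mul _)

lemma fderiv_kelvin_comp (lam mu : ℝ) (y b x : E3) (h : x - y ≠ 0) (i l : Fin 3) :
    fderiv ℝ (fun z : E3 => toE3 ((kelvin lam mu (z - y)).mulVec fun j => b j) i) x
        (EuclideanSpace.single l 1) =
      (((1 / mu + 1 / (2 * mu + lam)) / 2) / (4 * π)) * b i * (x - y) l * (‖x - y‖ ^ 3)⁻¹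
        - (((1 / mu - 1 / (2 * mu + lam)) / 2) / (4 * π)) *
            ((if i = l then (1:ℝ) else 0) * (∑ k, (x - y) k * b k) + (x - y) i * b l) *
            (‖x - y‖ ^ 3)⁻¹
        + 3 * (((1 / mu - 1 / (2 * mu + lam)) / 2) / (4 * π)) *
            ((x - y) i * (∑ k, (x - y) k * b k)) * (x - y) l * (‖x - y‖ ^ 5)⁻¹ := by
  rw [(hasFDerivAt_kelvin_comp lam mu y b x h i).fderiv]
  simp only [ContinuousLinearMap.add_apply, ContinuousLinearMap.coe_smul', Pi.smul_apply,
    smul_eq_mul, innerSL_apply_apply, EuclideanSpace.inner_single_right, _root_.map_one, conj_trivial,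
    ContinuousLinearMap.coe_sum', Finset.sum_apply, PiLp.proj_apply,
    EuclideanSpace.single_apply, mul_ite, mul_one, mul_zero, Finset.sum_ite_eq,
    Finset.mem_univ, if_true, one_mul]
  simp only [Finset.sum_ite_eq', Finset.mem_univ, if_true]
  by_cases hil : i = l <;> simp only [hil, if_true, if_false, one_mul, zero_mul] <;> ring

end Aux

set_option maxHeartbeats 4000000 in
/-- the conormal derivative of the Kelvin matrix satisfies
`∂_ν (G(·−y)b)(x) = (−b₁ K₁(x,y) + K₂(x,y)) b` with
`K₁(x,y) = (ν (x−y)ᵗ − (x−y) νᵗ)/(4π|x−y|³)` and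
`K₂(x,y) = b₁ ((x−y)·ν)/(4π|x−y|³) I₃ + b₂ ((x−y)·ν)/(4π|x−y|⁵) (x−y)(x−y)ᵗ`,
where `b₁ = μ/(2μ+λ)` and `b₂ = 3(μ+λ)/(2μ+λ)`. -/
theorem conormal_derivative_kelvin (lam mu : ℝ) (hmu : 0 < mu)
    (hconv : 0 < 3 * lam + 2 * mu)
    (x y : E3) (hxy : x ≠ y) (ν : E3) (hν : ‖ν‖ = 1) (b : E3) :
    let b₁ : ℝ := mu / (2 * mu + lam)
    let b₂ : ℝ := 3 * (mu + lam) / (2 * mu + lam)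
    let w : E3 → E3 := fun z => toE3 ((kelvin lam mu (z - y)).mulVec fun i => b i)
    let K₁ : Matrix (Fin 3) (Fin 3) ℝ :=
      (4 * π * ‖x - y‖ ^ 3)⁻¹ • (outer ν (x - y) - outer (x - y) ν)
    let K₂ : Matrix (Fin 3) (Fin 3) ℝ :=
      (b₁ * ⟪x - y, ν⟫ / (4 * π * ‖x - y‖ ^ 3)) • (1 : Matrix (Fin 3) (Fin 3) ℝ)
        + (b₂ * ⟪x - y, ν⟫ / (4 * π * ‖x - y‖ ^ 5)) • outer (x - y) (x - y)
    (lam * div3 w x) • ν + mu • toE3 ((jac3 w x + (jac3 w x)ᵀ).mulVec fun i => ν i)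
      = toE3 (((-b₁) • K₁ + K₂).mulVec fun i => b i) := by
  intro b₁ b₂ w K₁ K₂
  have hsub : x - y ≠ 0 := sub_ne_zero.mpr hxy
  have hr : (0:ℝ) < ‖x - y‖ := norm_pos_iff.mpr hsub
  have hE := fun i l => fderiv_kelvin_comp lam mu y b x hsub i l
  have hinner : (⟪x - y, ν⟫ : ℝ) =
      (x - y) 0 * ν 0 + (x - y) 1 * ν 1 + (x - y) 2 * ν 2 := by
    simp [PiLp.inner_apply, RCLike.inner_apply, conj_trivial, Fin.sum_univ_three]
    ring
  have hs : ‖x - y‖ ^ 2 = (x - y) 0 ^ 2 + (x - y) 1 ^ 2 + (x - y) 2 ^ 2 := by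
    rw [EuclideanSpace.norm_eq, Real.sq_sqrt (by positivity)]
    simp [Fin.sum_univ_three, Real.norm_eq_abs, sq_abs]
  have hS0 : (x - y) 0 ^ 2 + (x - y) 1 ^ 2 + (x - y) 2 ^ 2 ≠ 0 := by
    rw [← hs]; positivity
  have h3 : ‖x - y‖ ^ 3 = ((x - y) 0 ^ 2 + (x - y) 1 ^ 2 + (x - y) 2 ^ 2) * ‖x - y‖ := by
    rw [← hs]; ring
  have h5 : ‖x - y‖ ^ 5 =
      ((x - y) 0 ^ 2 + (x - y) 1 ^ 2 + (x - y) 2 ^ 2) ^ 2 * ‖x - y‖ := by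
    rw [← hs]; ring
  have hml : 2 * mu + lam ≠ 0 := by nlinarith
  have hq : ‖x - y‖ ^ 2 * (‖x - y‖ ^ 5)⁻¹ = (‖x - y‖ ^ 3)⁻¹ := by
    rw [show (5:ℕ) = 2 + 3 from rfl, pow_add, mul_inv]
    rw [← mul_assoc, mul_inv_cancel₀ (by positivity : ‖x - y‖ ^ 2 ≠ 0), one_mul]
  have hdiv : div3 w x = (2 * mu + lam)⁻¹ / (4 * π) *
      (∑ k, (x - y) k * b k) * (‖x - y‖ ^ 3)⁻¹ := by
    simp only [w, div3, pd]
    simp only [hE]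
    simp only [Fin.sum_univ_three, Fin.reduceEq, reduceIte, ite_true, ite_false,
      one_mul, zero_mul, mul_zero]
    linear_combination
      (-(3 * ((1 / mu - 1 / (2 * mu + lam)) / 2 / (4 * π)) *
          ((x - y) 0 * b 0 + (x - y) 1 * b 1 + (x - y) 2 * b 2) * (‖x - y‖ ^ 5)⁻¹)) * hs
        + (3 * ((1 / mu - 1 / (2 * mu + lam)) / 2 / (4 * π)) *
          ((x - y) 0 * b 0 + (x - y) 1 * b 1 + (x - y) 2 * b 2)) * hq
  ext i
  simp only [PiLp.add_apply, PiLp.smul_apply, smul_eq_mul, toE3_apply]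
  rw [hdiv]
  simp only [jac3, w]
  simp only [hE]
  simp only [b₁, b₂, K₁, K₂, toE3_apply, Matrix.mulVec, dotProduct,
    Matrix.add_apply, Matrix.transpose_apply, Matrix.of_apply, Matrix.smul_apply,
    Matrix.sub_apply, Matrix.one_apply, outer, smul_eq_mul, hinner, Fin.sum_univ_three]
  fin_cases i <;>
    simp only [Fin.reduceFinMk, Fin.isValue, Fin.reduceEq, reduceIte,
      one_mul, zero_mul, mul_zero, mul_one] <;>
    field_simp [hr.ne', hml, hmu.ne', Real.pi_ne_zero] <;>
    ring

end
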